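/- The inequality (1/π) ∫_{ℝ²} e^{−6(x² + y²)} · |1 − 30(x² + y²) + 108(x² + y²)²| dx dy > 1/(2·√2) holds. -/

import Mathlib

open MeasureTheory Real Set

noncomputable def myQ (p : ℝ × ℝ) : ℝ :=
  Real.exp (-(6 * (p.1 ^ 2 + p.2 ^ 2))) *
    (1 - 30 * (p.1 ^ 2 + p.2 ^ 2) + 108 * (p.1 ^ 2 + p.2 ^ 2) ^ 2)

-- 1D integrability of x^n e^{-6x^2}
lemma int1d (n : ℕ) : Integrable (fun x : ℝ => x ^ n * Real.exp (-6 * x ^ 2)) := by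
  have := integrable_rpow_mul_exp_neg_mul_sq (b := 6) (by norm_num) (s := (n : ℝ)) (lt_of_lt_of_le neg_one_lt_zero (Nat.cast_nonneg n))
  simpa [Real.rpow_natCast] using this

lemma int2d (i j : ℕ) : Integrable (fun p : ℝ × ℝ =>
    (p.1 ^ i * Real.exp (-6 * p.1 ^ 2)) * (p.2 ^ j * Real.exp (-6 * p.2 ^ 2))) := by
  rw [show (volume : Measure (ℝ × ℝ)) = Measure.prod volume volume from rfl]
  exact (int1d i).mul_prod (int1d j)

lemma myQ_eq : myQ = fun p : ℝ × ℝ =>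
    ((p.1 ^ 0 * Real.exp (-6 * p.1 ^ 2)) * (p.2 ^ 0 * Real.exp (-6 * p.2 ^ 2)))
    - 30 * ((p.1 ^ 2 * Real.exp (-6 * p.1 ^ 2)) * (p.2 ^ 0 * Real.exp (-6 * p.2 ^ 2)))
    - 30 * ((p.1 ^ 0 * Real.exp (-6 * p.1 ^ 2)) * (p.2 ^ 2 * Real.exp (-6 * p.2 ^ 2)))
    + 108 * ((p.1 ^ 4 * Real.exp (-6 * p.1 ^ 2)) * (p.2 ^ 0 * Real.exp (-6 * p.2 ^ 2)))
    + 216 * ((p.1 ^ 2 * Real.exp (-6 * p.1 ^ 2)) * (p.2 ^ 2 * Real.exp (-6 * p.2 ^ 2)))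
    + 108 * ((p.1 ^ 0 * Real.exp (-6 * p.1 ^ 2)) * (p.2 ^ 4 * Real.exp (-6 * p.2 ^ 2))) := by
  funext p
  have h : -(6 * (p.1 ^ 2 + p.2 ^ 2)) = -6 * p.1 ^ 2 + -6 * p.2 ^ 2 := by ring
  simp only [myQ, h, Real.exp_add]
  ring

lemma myQ_int : Integrable myQ := by
  rw [myQ_eq]
  exact ((((((int2d 0 0).sub ((int2d 2 0).const_mul 30)).sub
    ((int2d 0 2).const_mul 30)).add ((int2d 4 0).const_mul 108)).add
    ((int2d 2 2).const_mul 216)).add ((int2d 0 4).const_mul 108))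

noncomputable def myF (r : ℝ) : ℝ := -(Real.exp (-(6 * r ^ 2)) * (9 * r ^ 4 + r ^ 2 / 2 + 1 / 6))

noncomputable def myH (r : ℝ) : ℝ :=
  r * (Real.exp (-(6 * r ^ 2)) * (1 - 30 * r ^ 2 + 108 * (r ^ 2) ^ 2))

lemma myF_deriv (r : ℝ) : HasDerivAt myF (myH r) r := by
  have h1 : HasDerivAt (fun r : ℝ => -(6 * r ^ 2)) (-(12 * r)) r := by
    have := (hasDerivAt_pow 2 r).const_mul (6 : ℝ)
    have h1' : HasDerivAt (fun r : ℝ => 6 * r ^ 2) (12 * r) r := by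
      exact this.congr_deriv (by push_cast; ring)
    exact h1'.neg
  have h2 := h1.exp
  have h3 : HasDerivAt (fun r : ℝ => 9 * r ^ 4 + r ^ 2 / 2 + 1 / 6)
      (36 * r ^ 3 + r) r := by
    have h4 := (hasDerivAt_pow 4 r).const_mul (9 : ℝ)
    have h5 := (hasDerivAt_pow 2 r).div_const (2 : ℝ)
    have := (h4.add h5).add_const (1 / 6 : ℝ)
    exact this.congr_deriv (by push_cast; ring)
  have := (h2.mul h3).neg
  exact this.congr_deriv (by simp only [myH]; ring)

lemma myH_int : Integrable myH := by
  have : myH = fun r : ℝ => (r ^ 1 * Real.exp (-6 * r ^ 2))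
      - 30 * (r ^ 3 * Real.exp (-6 * r ^ 2)) + 108 * (r ^ 5 * Real.exp (-6 * r ^ 2)) := by
    funext r
    simp only [myH]
    ring_nf
  rw [this]
  exact ((int1d 1).sub ((int1d 3).const_mul 30)).add ((int1d 5).const_mul 108)

lemma myF_tendsto : Filter.Tendsto myF Filter.atTop (nhds 0) := by
  have hc : Filter.Tendsto (fun r : ℝ => 6 * r ^ 2) Filter.atTop Filter.atTop :=
    (Filter.tendsto_pow_atTop (two_ne_zero)).const_mul_atTop (by norm_num)
  have t0 := (tendsto_pow_mul_exp_neg_atTop_nhds_zero 0).comp hc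
  have t1 := (tendsto_pow_mul_exp_neg_atTop_nhds_zero 1).comp hc
  have t2 := (tendsto_pow_mul_exp_neg_atTop_nhds_zero 2).comp hc
  have := ((((t2.const_mul (1/4 : ℝ)).add (t1.const_mul (1/12 : ℝ))).add
    (t0.const_mul (1/6 : ℝ))).neg)
  have heq : myF = fun r : ℝ =>
      -((1/4) * ((fun x : ℝ => x ^ 2 * Real.exp (-x)) ((fun r : ℝ => 6 * r ^ 2) r))
        + (1/12) * ((fun x : ℝ => x ^ 1 * Real.exp (-x)) ((fun r : ℝ => 6 * r ^ 2) r))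
        + (1/6) * ((fun x : ℝ => x ^ 0 * Real.exp (-x)) ((fun r : ℝ => 6 * r ^ 2) r))) := by
    funext r
    simp only [myF, pow_zero, pow_one, one_mul]
    ring
  rw [heq]
  simpa using this

lemma radial_Ioi : ∫ r in Set.Ioi (0 : ℝ), myH r = 1 / 6 := by
  have := integral_Ioi_of_hasDerivAt_of_tendsto' (f := myF) (f' := myH) (a := 0)
    (fun x _ => myF_deriv x) myH_int.integrableOn myF_tendsto
  rw [this]
  simp [myF]

lemma radial_Icc : ∫ r in Set.Icc (1/5 : ℝ) (49/100), myH r = myF (49/100) - myF (1/5) := by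
  rw [integral_Icc_eq_integral_Ioc, ← intervalIntegral.integral_of_le (by norm_num)]
  exact intervalIntegral.integral_eq_sub_of_hasDerivAt (fun x _ => myF_deriv x)
    myH_int.intervalIntegrable

lemma integral_radial (k : ℝ → ℝ) :
    ∫ p : ℝ × ℝ, k (p.1 ^ 2 + p.2 ^ 2) =
      (∫ r in Set.Ioi (0 : ℝ), r * k (r ^ 2)) * (2 * π) := by
  rw [← integral_comp_polarCoord_symm (fun p : ℝ × ℝ => k (p.1 ^ 2 + p.2 ^ 2))]
  have htarget : polarCoord.target = Set.Ioi (0 : ℝ) ×ˢ Set.Ioo (-π) π := rfl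
  rw [htarget]
  have hcongr : Set.EqOn
      (fun p : ℝ × ℝ => p.1 • k ((polarCoord.symm p).1 ^ 2 + (polarCoord.symm p).2 ^ 2))
      (fun p : ℝ × ℝ => (fun r => r * k (r ^ 2)) p.1 * (fun _ : ℝ => (1 : ℝ)) p.2)
      (Set.Ioi (0 : ℝ) ×ˢ Set.Ioo (-π) π) := by
    intro p _
    have hsq : (polarCoord.symm p).1 ^ 2 + (polarCoord.symm p).2 ^ 2 = p.1 ^ 2 := by
      have hs : polarCoord.symm p = (p.1 * Real.cos p.2, p.1 * Real.sin p.2) := rfl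
      rw [hs]
      calc (p.1 * Real.cos p.2) ^ 2 + (p.1 * Real.sin p.2) ^ 2
          = p.1 ^ 2 * (Real.sin p.2 ^ 2 + Real.cos p.2 ^ 2) := by ring
        _ = p.1 ^ 2 := by rw [Real.sin_sq_add_cos_sq, mul_one]
    simp only [hsq, smul_eq_mul, mul_one]
  rw [setIntegral_congr_fun (measurableSet_Ioi.prod measurableSet_Ioo) hcongr]
  rw [Measure.volume_eq_prod,
    setIntegral_prod_mul (fun r : ℝ => r * k (r ^ 2)) (fun _ : ℝ => (1 : ℝ))
      (Set.Ioi (0 : ℝ)) (Set.Ioo (-π) π)]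
  congr 1
  simp only [integral_const, MeasurableSet.univ, Measure.restrict_apply, Set.univ_inter,
    Real.volume_Ioo, smul_eq_mul, mul_one]
  rw [Measure.real, Measure.restrict_apply MeasurableSet.univ, Set.univ_inter, Real.volume_Ioo,
    ENNReal.toReal_ofReal (by linarith [Real.pi_pos] : (0:ℝ) ≤ π - -π)]
  ring

noncomputable def k1 (s : ℝ) : ℝ := Real.exp (-(6 * s)) * (1 - 30 * s + 108 * s ^ 2)

def ann : Set (ℝ × ℝ) := {p | p.1 ^ 2 + p.2 ^ 2 ∈ Set.Icc (1/25 : ℝ) (2401/10000)}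

lemma ann_meas : MeasurableSet ann := by
  have h : Measurable fun p : ℝ × ℝ => p.1 ^ 2 + p.2 ^ 2 := by fun_prop
  exact h measurableSet_Icc

lemma int_myQ : ∫ p : ℝ × ℝ, myQ p = (1/6) * (2 * π) := by
  have h1 : myQ = fun p : ℝ × ℝ => k1 (p.1 ^ 2 + p.2 ^ 2) := rfl
  rw [h1, integral_radial k1]
  have h2 : (fun r : ℝ => r * k1 (r ^ 2)) = myH := rfl
  rw [show (∫ r in Set.Ioi (0:ℝ), r * k1 (r ^ 2)) = ∫ r in Set.Ioi (0:ℝ), myH r from rfl,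
    radial_Ioi]

lemma int_ind : ∫ p : ℝ × ℝ, ann.indicator myQ p = (myF (49/100) - myF (1/5)) * (2 * π) := by
  have h1 : ann.indicator myQ = fun p : ℝ × ℝ =>
      ((Set.Icc (1/25 : ℝ) (2401/10000)).indicator k1) (p.1 ^ 2 + p.2 ^ 2) := rfl
  rw [h1, integral_radial]
  have h2 : ∫ r in Set.Ioi (0:ℝ),
      r * ((Set.Icc (1/25 : ℝ) (2401/10000)).indicator k1) (r ^ 2) =
      ∫ r in Set.Ioi (0:ℝ), ((Set.Icc (1/5 : ℝ) (49/100)).indicator myH) r := by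
    apply setIntegral_congr_fun measurableSet_Ioi
    intro r hr
    have hr' : (0:ℝ) < r := hr
    have hiff : r ^ 2 ∈ Set.Icc (1/25 : ℝ) (2401/10000) ↔
        r ∈ Set.Icc (1/5 : ℝ) (49/100) := by
      simp only [Set.mem_Icc]
      constructor
      · rintro ⟨h1, h2⟩; constructor <;> nlinarith
      · rintro ⟨h1, h2⟩; constructor <;> nlinarith
    show r * ((Set.Icc (1/25 : ℝ) (2401/10000)).indicator k1) (r ^ 2) =
      ((Set.Icc (1/5 : ℝ) (49/100)).indicator myH) r
    by_cases h : r ^ 2 ∈ Set.Icc (1/25 : ℝ) (2401/10000)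
    · rw [Set.indicator_of_mem h, Set.indicator_of_mem (hiff.mp h)]
      rfl
    · rw [Set.indicator_of_notMem h, Set.indicator_of_notMem (fun hc => h (hiff.mpr hc)),
        mul_zero]
  rw [h2, setIntegral_indicator measurableSet_Icc]
  have h3 : Set.Ioi (0:ℝ) ∩ Set.Icc (1/5 : ℝ) (49/100) = Set.Icc (1/5 : ℝ) (49/100) :=
    Set.inter_eq_self_of_subset_right (fun x hx => lt_of_lt_of_le (by norm_num) hx.1)
  rw [h3, radial_Icc]

lemma g_int : Integrable (fun p : ℝ × ℝ => myQ p - 2 * ann.indicator myQ p) :=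
  myQ_int.sub ((myQ_int.indicator ann_meas).const_mul 2)

lemma g_le (p : ℝ × ℝ) : myQ p - 2 * ann.indicator myQ p ≤ |myQ p| := by
  by_cases h : p ∈ ann
  · rw [Set.indicator_of_mem h]
    have := neg_abs_le (myQ p)
    linarith
  · rw [Set.indicator_of_notMem h]
    have := le_abs_self (myQ p)
    linarith

lemma int_g : ∫ p : ℝ × ℝ, (myQ p - 2 * ann.indicator myQ p) =
    (1/3 - 4 * (myF (49/100) - myF (1/5))) * π := by
  rw [integral_sub myQ_int ((myQ_int.indicator ann_meas).const_mul 2),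
    MeasureTheory.integral_const_mul, int_myQ, int_ind]
  ring


/-- **GME detection of the tripartite state `|ψ₂⟩` (paper's Corollary 1, `M = 3`).**
`(1/π) ∫_{ℝ²} e^{−6(x²+y²)} |1 − 30(x²+y²) + 108(x²+y²)²| dx dy > 1/(2√2)`. -/
theorem stmt11 :
    (1 / Real.pi) * ∫ p : ℝ × ℝ,
        Real.exp (-(6 * (p.1 ^ 2 + p.2 ^ 2))) *
          |1 - 30 * (p.1 ^ 2 + p.2 ^ 2) + 108 * (p.1 ^ 2 + p.2 ^ 2) ^ 2| >
      1 / (2 * Real.sqrt 2) := by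
  have habs : (fun p : ℝ × ℝ => Real.exp (-(6 * (p.1 ^ 2 + p.2 ^ 2))) *
      |1 - 30 * (p.1 ^ 2 + p.2 ^ 2) + 108 * (p.1 ^ 2 + p.2 ^ 2) ^ 2|) =
      fun p : ℝ × ℝ => |myQ p| := by
    funext p
    rw [myQ, abs_mul, abs_of_pos (Real.exp_pos _)]
  rw [habs]
  have hmono : ∫ p : ℝ × ℝ, (myQ p - 2 * ann.indicator myQ p) ≤ ∫ p : ℝ × ℝ, |myQ p| :=
    integral_mono g_int myQ_int.abs g_le
  rw [int_g] at hmono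
  -- numeric bound: 1/(2√2) < 1/3 - 4 * (myF (49/100) - myF (1/5))
  have hnum : 1 / (2 * Real.sqrt 2) < 1/3 - 4 * (myF (49/100) - myF (1/5)) := by
    have hE1 : Real.exp (-(6 * (1/5 : ℝ) ^ 2)) ≤ 25/31 := by
      have h1 : (31/25 : ℝ) ≤ Real.exp (6/25) := by
        have := Real.add_one_le_exp (6/25 : ℝ)
        linarith
      have h2 : Real.exp (-(6 * (1/5 : ℝ) ^ 2)) = (Real.exp (6/25))⁻¹ := by
        rw [← Real.exp_neg]; norm_num
      rw [h2]
      rw [show (25/31 : ℝ) = (31/25 : ℝ)⁻¹ by norm_num]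
      exact inv_anti₀ (by norm_num) h1
    have hE2 : (72797/80000 : ℝ) ^ 16 ≤ Real.exp (-(6 * (49/100 : ℝ) ^ 2)) := by
      have h1 : (72797/80000 : ℝ) ≤ Real.exp (-(7203/80000)) := by
        have := Real.add_one_le_exp (-(7203/80000) : ℝ)
        linarith
      have h2 := pow_le_pow_left₀ (by norm_num : (0:ℝ) ≤ 72797/80000) h1 16
      rw [← Real.exp_nat_mul] at h2
      calc (72797/80000 : ℝ) ^ 16 ≤ Real.exp (16 * -(7203/80000)) := h2
        _ = Real.exp (-(6 * (49/100 : ℝ) ^ 2)) := by norm_num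
    have hsqrt : Real.sqrt 2 ^ 2 = 2 := Real.sq_sqrt (by norm_num)
    have hsp : 0 < Real.sqrt 2 := Real.sqrt_pos.mpr (by norm_num)
    simp only [myF]
    set E1 := Real.exp (-(6 * (1/5 : ℝ) ^ 2)) with hE1def
    set E2 := Real.exp (-(6 * (49/100 : ℝ) ^ 2)) with hE2def
    have key : (1/3 : ℝ) + 4 * ((72797/80000 : ℝ) ^ 16) *
          (9 * (49/100:ℝ) ^ 4 + (49/100:ℝ) ^ 2 / 2 + 1/6)
        - 4 * (25/31) * (9 * (1/5:ℝ) ^ 4 + (1/5:ℝ) ^ 2 / 2 + 1/6) ≤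
        1/3 - 4 * (-(E2 * (9 * (49/100:ℝ) ^ 4 + (49/100:ℝ) ^ 2 / 2 + 1/6)) -
          -(E1 * (9 * (1/5:ℝ) ^ 4 + (1/5:ℝ) ^ 2 / 2 + 1/6))) := by
      nlinarith [hE1, hE2]
    refine lt_of_lt_of_le ?_ key
    set X : ℝ := 1/3 + 4 * ((72797/80000 : ℝ) ^ 16) *
          (9 * (49/100:ℝ) ^ 4 + (49/100:ℝ) ^ 2 / 2 + 1/6)
        - 4 * (25/31) * (9 * (1/5:ℝ) ^ 4 + (1/5:ℝ) ^ 2 / 2 + 1/6) with hXdef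
    have hXpos : 0 < X := by rw [hXdef]; norm_num
    have h2X : (2:ℝ) < (4 * X) ^ 2 := by rw [hXdef]; norm_num
    have hs4 : Real.sqrt 2 < 4 * X := (Real.sqrt_lt' (by positivity)).mpr h2X
    rw [div_lt_iff₀ (by positivity : (0:ℝ) < 2 * Real.sqrt 2)]
    nlinarith [hsqrt, hsp, hs4, hXpos]
  have hpi : 0 < π := Real.pi_pos
  calc (1:ℝ) / (2 * Real.sqrt 2) < 1/3 - 4 * (myF (49/100) - myF (1/5)) := hnum
    _ = (1 / π) * ((1/3 - 4 * (myF (49/100) - myF (1/5))) * π) := by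
        field_simp
    _ ≤ (1 / π) * ∫ p : ℝ × ℝ, |myQ p| := by
        apply mul_le_mul_of_nonneg_left hmono (by positivity)
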